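/- Let B be the open unit ball of c₀ and let g : B → ℓ_∞ be holomorphic with ‖g(x)‖ ≤ 1 for all x ∈ B. If there exists x₀ ∈ B with ‖g(x₀)‖ = 1, then ‖g(x)‖ = 1 for all x ∈ B; consequently either g(B) is contained in the open unit ball of ℓ_∞, or g(B) is contained in the unit sphere of ℓ_∞. -/
import Mathlib

open Metric ZeroAtInfty

/-- `c₀`: complex sequences tending to zero, with the sup norm. -/
abbrev CZeroSeq : Type := C₀(ℕ, ℂ)

/-- `ℓ_∞`: bounded complex sequences with the sup norm. -/
abbrev LinftySeq : Type := lp (fun _ : ℕ => ℂ) ⊤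

instance : Nontrivial LinftySeq :=
  ⟨lp.single ⊤ 0 1, 0, by
    intro h
    have := congrArg (fun f : LinftySeq => (f : ∀ n, ℂ) 0) h
    simp [lp.single_apply] at this⟩

theorem stmt_19 (g : CZeroSeq → LinftySeq)
    (hg : DifferentiableOn ℂ g (ball (0 : CZeroSeq) 1))
    (hgb : ∀ x ∈ ball (0 : CZeroSeq) 1, ‖g x‖ ≤ 1) :
    ((∃ x₀ ∈ ball (0 : CZeroSeq) 1, ‖g x₀‖ = 1) →
        ∀ x ∈ ball (0 : CZeroSeq) 1, ‖g x‖ = 1) ∧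
    ((∀ x ∈ ball (0 : CZeroSeq) 1, ‖g x‖ < 1) ∨
      (∀ x ∈ ball (0 : CZeroSeq) 1, ‖g x‖ = 1)) := by
  have key : (∃ x₀ ∈ ball (0 : CZeroSeq) 1, ‖g x₀‖ = 1) →
      ∀ x ∈ ball (0 : CZeroSeq) 1, ‖g x‖ = 1 := by
    rintro ⟨x₀, hx₀, hnorm⟩ x hx
    have hmax : IsMaxOn (norm ∘ g) (ball (0 : CZeroSeq) 1) x₀ := by
      intro y hy
      simp only [Function.comp_apply, Set.mem_setOf_eq, hnorm]
      exact hgb y hy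
    have := Complex.norm_eqOn_of_isPreconnected_of_isMaxOn
      (convex_ball (0 : CZeroSeq) 1).isPreconnected isOpen_ball hg hx₀ hmax hx
    simpa [hnorm] using this
  refine ⟨key, ?_⟩
  by_cases h : ∃ x₀ ∈ ball (0 : CZeroSeq) 1, ‖g x₀‖ = 1
  · exact Or.inr (key h)
  · push_neg at h
    exact Or.inl fun x hx => lt_of_le_of_ne (hgb x hx) (h x hx)
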